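/- Fix the parameters v_free = 1, a = 1, s₀ = 16, b = 1/4, τ = 8, δ = 4, and let the leader be stationary: x_l(t) ≡ x_l0, v_l(t) ≡ 0. Let the follower start at rest, v(0) = 0, at distance x(0) = x_l0 − l − ε with 0 < ε < 1, so that the follower's velocity satisfies v̇(t) = 1 − v(t)⁴ − ((4+v(t))²/(ε − ∫₀ᵗ v(s) ds))² as long as the solution exists. Then if the solution exists on [0,1], there exists t̄ ∈ [0,1] with v(t̄) < −1. -/

import Mathlib

open MeasureTheory Set

/-- **Negative velocity below −1 for the concrete IDM example.**
With parameters `v_free = 1`, `a = 1`, `s₀ = 16`, `b = 1/4`, `τ = 8`, `δ = 4`,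
a stationary leader and a follower starting at rest at distance `ε ∈ (0,1)`
behind the leader (gap `ε`), the follower's velocity satisfies
`v̇(t) = 1 − v(t)⁴ − ((4 + v(t))² / (ε − ∫₀ᵗ v(s) ds))²`.
If the solution exists on `[0,1]`, then `v(t̄) < −1` for some `t̄ ∈ [0,1]`. -/
theorem idm_velocity_below_neg_one
    (ε : ℝ) (hε : 0 < ε) (hε1 : ε < 1) (v : ℝ → ℝ)
    (hv0 : v 0 = 0)
    (hden : ∀ t ∈ Icc (0:ℝ) 1, 0 < ε - ∫ s in (0:ℝ)..t, v s)
    (hode : ∀ t ∈ Icc (0:ℝ) 1,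
      HasDerivAt v
        (1 - (v t) ^ 4 - ((4 + v t) ^ 2 / (ε - ∫ s in (0:ℝ)..t, v s)) ^ 2) t) :
    ∃ tbar ∈ Icc (0:ℝ) 1, v tbar < -1 := by
  by_contra hcon
  push_neg at hcon
  have hcont : ContinuousOn v (Icc 0 1) := fun t ht =>
    ((hode t ht).continuousAt).continuousWithinAt
  -- derivative bound: v' t ≤ -2 on [0,1]
  have hderiv_le : ∀ t ∈ Icc (0:ℝ) 1,
      (1 - (v t) ^ 4 - ((4 + v t) ^ 2 / (ε - ∫ s in (0:ℝ)..t, v s)) ^ 2) ≤ -2 := by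
    intro t ht
    have hDpos := hden t ht
    have hintg : IntervalIntegrable v volume 0 t :=
      (hcont.mono (Icc_subset_Icc le_rfl ht.2)).intervalIntegrable_of_Icc ht.1
    have hint : -t ≤ ∫ s in (0:ℝ)..t, v s := by
      have h1 : ∫ s in (0:ℝ)..t, (-1:ℝ) ≤ ∫ s in (0:ℝ)..t, v s := by
        apply intervalIntegral.integral_mono_on ht.1 (by simp) hintg
        intro s hs
        exact hcon s ⟨hs.1, hs.2.trans ht.2⟩
      simpa using h1
    have hD2 : ε - ∫ s in (0:ℝ)..t, v s ≤ 2 := by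
      have := ht.2
      linarith
    have hvt : -1 ≤ v t := hcon t ht
    have hnum : (9:ℝ) ≤ (4 + v t) ^ 2 := by nlinarith
    have hQ : (9:ℝ) / 2 ≤ (4 + v t) ^ 2 / (ε - ∫ s in (0:ℝ)..t, v s) := by
      rw [div_le_div_iff₀ (by norm_num) hDpos]
      nlinarith
    have hQ2 : (81:ℝ) / 4 ≤ ((4 + v t) ^ 2 / (ε - ∫ s in (0:ℝ)..t, v s)) ^ 2 := by
      nlinarith
    have hv4 : (0:ℝ) ≤ (v t) ^ 4 := by positivity
    linarith
  -- g t = v t + 2 t is antitone on [0,1]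
  set g : ℝ → ℝ := fun t => v t + 2 * t with hg
  have hganti : AntitoneOn g (Icc 0 1) := by
    apply antitoneOn_of_deriv_nonpos (convex_Icc 0 1)
    · exact hcont.add (continuousOn_const.mul continuousOn_id)
    · intro x hx
      rw [interior_Icc] at hx
      exact ((hode x ⟨hx.1.le, hx.2.le⟩).add ((hasDerivAt_id x).const_mul 2)).differentiableAt.differentiableWithinAt
    · intro x hx
      rw [interior_Icc] at hx
      have hd := (hode x ⟨hx.1.le, hx.2.le⟩).add ((hasDerivAt_id x).const_mul 2)
      simp only [id_eq] at hd
      rw [hg, show (fun t => v t + 2 * t) = (v + fun y => 2 * y) from rfl, hd.deriv]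
      have := hderiv_le x ⟨hx.1.le, hx.2.le⟩
      simp only [mul_one]
      linarith
  have h10 : g 1 ≤ g 0 := hganti (by norm_num) (by norm_num) zero_le_one
  have h1 : -1 ≤ v 1 := hcon 1 (by norm_num)
  simp only [hg, hv0] at h10
  linarith
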